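/- Let M be an n×n Z-matrix that is also a P-matrix (i.e., a K-matrix). Then M is nonsingular and M⁻¹ has all entries nonnegative. -/

import Mathlib

open Matrix

/-- A square real matrix is a P-matrix if all of its principal minors are positive. -/
def IsPMat {n : ℕ} (M : Matrix (Fin n) (Fin n) ℝ) : Prop :=
  ∀ S : Finset (Fin n),
    0 < (M.submatrix (Subtype.val : {i // i ∈ S} → Fin n) Subtype.val).det

/-- A Z-matrix has nonpositive off-diagonal entries. -/
def IsZMat {n : ℕ} (M : Matrix (Fin n) (Fin n) ℝ) : Prop :=
  ∀ i j, i ≠ j → M i j ≤ 0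

/-- All principal minors (indexed by embeddings) are positive. -/
def PosMinors {m : Type*} [Fintype m] [DecidableEq m] (M : Matrix m m ℝ) : Prop :=
  ∀ (k : ℕ) (f : Fin k ↪ m), 0 < (M.submatrix f f).det

lemma isPMat_posMinors {n : ℕ} {M : Matrix (Fin n) (Fin n) ℝ} (hP : IsPMat M) :
    PosMinors M := by
  intro k f
  set S : Finset (Fin n) := Finset.univ.map f with hS
  have hmem : ∀ i : Fin k, f i ∈ S := fun i => by simp [hS]
  let g : Fin k → {i // i ∈ S} := fun i => ⟨f i, hmem i⟩
  have hginj : Function.Injective g := by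
    intro a b hab
    exact f.injective (congrArg Subtype.val hab)
  have hgsurj : Function.Surjective g := by
    intro ⟨x, hx⟩
    rw [hS] at hx
    obtain ⟨i, _, hi⟩ := Finset.mem_map.mp hx
    exact ⟨i, by simp [g, hi]⟩
  let e : Fin k ≃ {i // i ∈ S} := Equiv.ofBijective g ⟨hginj, hgsurj⟩
  have : M.submatrix f f =
      (M.submatrix (Subtype.val : {i // i ∈ S} → Fin n) Subtype.val).submatrix e e := by
    ext i j; rfl
  rw [this, Matrix.det_submatrix_equiv_self]
  exact hP S

lemma kMatrix_main : ∀ (n : ℕ) (M : Matrix (Fin n) (Fin n) ℝ),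
    (∀ i j, i ≠ j → M i j ≤ 0) → PosMinors M →
    0 < M.det ∧ ∀ i j, 0 ≤ M⁻¹ i j := by
  intro n
  induction n with
  | zero =>
    intro M _ _
    refine ⟨by simp [Matrix.det_fin_zero], fun i => i.elim0⟩
  | succ n ih =>
    intro M hZ hP
    -- reindex into a block matrix
    let e : Fin 1 ⊕ Fin n ≃ Fin (n + 1) := finSumFinEquiv.trans (finCongr (by omega))
    set N : Matrix (Fin 1 ⊕ Fin n) (Fin 1 ⊕ Fin n) ℝ := M.submatrix e e with hNdef
    have hZN : ∀ p q, p ≠ q → N p q ≤ 0 := by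
      intro p q hpq
      exact hZ (e p) (e q) (fun h => hpq (e.injective h))
    have hPN : PosMinors N := by
      intro k f
      have : N.submatrix f f = M.submatrix ((e : Fin 1 ⊕ Fin n → Fin (n+1)) ∘ f)
          ((e : Fin 1 ⊕ Fin n → Fin (n+1)) ∘ f) := by
        ext i j; rfl
      rw [this]
      exact hP k ⟨_, e.injective.comp f.injective⟩
    set A := N.toBlocks₁₁ with hA
    set B := N.toBlocks₁₂ with hB
    set C := N.toBlocks₂₁ with hC
    set D := N.toBlocks₂₂ with hD
    have hN : N = fromBlocks A B C D := (fromBlocks_toBlocks N).symm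
    set a : ℝ := A 0 0 with ha_def
    have ha : 0 < a := by
      have := hPN 1 ⟨fun _ => Sum.inl 0, fun x y _ => Subsingleton.elim x y⟩
      rwa [Matrix.det_fin_one] at this
    have hdetA : A.det = a := Matrix.det_fin_one A
    haveI : Invertible A := A.invertibleOfIsUnitDet (by rw [hdetA]; exact isUnit_iff_ne_zero.mpr ha.ne')
    have hAinv : A⁻¹ = a⁻¹ • (1 : Matrix (Fin 1) (Fin 1) ℝ) := by
      rw [Matrix.inv_def, Matrix.adjugate_fin_one, hdetA, Ring.inverse_eq_inv']
    have hinvOfA : ⅟A = A⁻¹ := invOf_eq_nonsing_inv A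
    set S : Matrix (Fin n) (Fin n) ℝ := D - C * A⁻¹ * B with hSdef
    have hS' : D - C * ⅟A * B = S := by rw [hinvOfA]
    -- entry formula for products through the 1×1 block
    have hmul1 : ∀ {p q : Type} (X : Matrix p (Fin 1) ℝ) (Y : Matrix (Fin 1) q ℝ)
        (i : p) (j : q), (X * A⁻¹ * Y) i j = X i 0 * a⁻¹ * Y 0 j := by
      intro p q X Y i j
      rw [Matrix.mul_apply, Fin.sum_univ_one, Matrix.mul_apply, Fin.sum_univ_one, hAinv]
      simp [Matrix.one_apply]
    have hB0 : ∀ (i : Fin 1) (j : Fin n), B i j ≤ 0 :=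
      fun i j => hZN (Sum.inl i) (Sum.inr j) (by simp)
    have hC0 : ∀ (i : Fin n) (j : Fin 1), C i j ≤ 0 :=
      fun i j => hZN (Sum.inr i) (Sum.inl j) (by simp)
    have hSZ : ∀ i j, i ≠ j → S i j ≤ 0 := by
      intro i j hij
      have hDij : D i j ≤ 0 := hZN (Sum.inr i) (Sum.inr j) (by simp [hij])
      have hterm : 0 ≤ C i 0 * a⁻¹ * B 0 j := by
        have h1 : C i 0 * a⁻¹ ≤ 0 :=
          mul_nonpos_of_nonpos_of_nonneg (hC0 i 0) (le_of_lt (inv_pos.mpr ha))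
        nlinarith [h1, hB0 0 j]
      have : S i j = D i j - C i 0 * a⁻¹ * B 0 j := by
        rw [hSdef, Matrix.sub_apply, hmul1 C B i j]
      rw [this]; linarith
    have hSsub : ∀ (k : ℕ) (f : Fin k ↪ Fin n),
        D.submatrix (⇑f) (⇑f) - C.submatrix (⇑f) (id : Fin 1 → Fin 1) * ⅟A *
          B.submatrix (id : Fin 1 → Fin 1) (⇑f) = S.submatrix (⇑f) (⇑f) := by
      intro k f
      ext i j
      rw [hinvOfA]
      simp only [Matrix.sub_apply, Matrix.submatrix_apply, id_eq]
      rw [hmul1 (C.submatrix (⇑f) (id : Fin 1 → Fin 1)) (B.submatrix (id : Fin 1 → Fin 1) (⇑f)) i j]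
      simp only [Matrix.submatrix_apply, id_eq]
      have : S (f i) (f j) = D (f i) (f j) - C (f i) 0 * a⁻¹ * B 0 (f j) := by
        rw [hSdef, Matrix.sub_apply, hmul1 C B (f i) (f j)]
      rw [this]
    have hSP : PosMinors S := by
      intro k f
      have hFsub : fromBlocks A (B.submatrix (id : Fin 1 → Fin 1) (⇑f))
          (C.submatrix (⇑f) (id : Fin 1 → Fin 1)) (D.submatrix (⇑f) (⇑f))
          = N.submatrix (Sum.map (id : Fin 1 → Fin 1) (⇑f)) (Sum.map (id : Fin 1 → Fin 1) (⇑f)) := by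
        ext p q
        rcases p with p | p <;> rcases q with q | q <;>
          simp [hN, Matrix.fromBlocks, Matrix.submatrix_apply]
      have hinj : Function.Injective (Sum.map (id : Fin 1 → Fin 1) (⇑f : Fin k → Fin n)) :=
        Function.Injective.sumMap (fun x y h => h) f.injective
      have hposF : 0 < (fromBlocks A (B.submatrix (id : Fin 1 → Fin 1) (⇑f))
          (C.submatrix (⇑f) (id : Fin 1 → Fin 1)) (D.submatrix (⇑f) (⇑f))).det := by
        rw [hFsub]
        let g : Fin (1 + k) ≃ Fin 1 ⊕ Fin k := finSumFinEquiv.symm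
        have : (N.submatrix (Sum.map (id : Fin 1 → Fin 1) (⇑f)) (Sum.map (id : Fin 1 → Fin 1) (⇑f))).det =
            ((N.submatrix (Sum.map (id : Fin 1 → Fin 1) (⇑f)) (Sum.map (id : Fin 1 → Fin 1) (⇑f))).submatrix g g).det :=
          (Matrix.det_submatrix_equiv_self g _).symm
        rw [this, Matrix.submatrix_submatrix]
        exact hPN (1 + k) ⟨_, hinj.comp g.injective⟩
      rw [Matrix.det_fromBlocks₁₁, hdetA, hSsub k f] at hposF
      nlinarith [ha, hposF]
    obtain ⟨hdetS, hSinv⟩ := ih S hSZ hSP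
    haveI : Invertible S := S.invertibleOfIsUnitDet (by simp [hdetS.ne'])
    have hinvOfS : ⅟S = S⁻¹ := invOf_eq_nonsing_inv S
    haveI hSchurInv : Invertible (D - C * ⅟A * B) := by rw [hS']; infer_instance
    haveI : Invertible (fromBlocks A B C D) := Matrix.fromBlocks₁₁Invertible A B C D
    haveI : Invertible N := by rw [hN]; infer_instance
    -- determinant
    have hdetN : 0 < N.det := by
      rw [hN, Matrix.det_fromBlocks₁₁, hdetA, hS']
      exact mul_pos ha hdetS
    have hdetM : 0 < M.det := by
      rwa [hNdef, Matrix.det_submatrix_equiv_self] at hdetN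
    refine ⟨hdetM, ?_⟩
    -- inverse formula
    have hNinv : N⁻¹ = fromBlocks (A⁻¹ + A⁻¹ * B * S⁻¹ * C * A⁻¹) (-(A⁻¹ * B * S⁻¹))
        (-(S⁻¹ * C * A⁻¹)) S⁻¹ := by
      have h3 : ⅟(D - C * ⅟A * B) = S⁻¹ := by
        rw [invOf_eq_nonsing_inv, hS']
      rw [hN, show (fromBlocks A B C D)⁻¹ = ⅟(fromBlocks A B C D) from
        (invOf_eq_nonsing_inv _).symm, Matrix.invOf_fromBlocks₁₁_eq A B C D, h3, hinvOfA]
    have hNinvNonneg : ∀ p q, 0 ≤ N⁻¹ p q := by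
      have hBS0 : ∀ i j, (B * S⁻¹) i j ≤ 0 := by
        intro i j
        rw [Matrix.mul_apply]
        apply Finset.sum_nonpos
        intro k _
        exact mul_nonpos_of_nonpos_of_nonneg (hB0 i k) (hSinv k j)
      have hBS : ∀ i j, (A⁻¹ * B * S⁻¹) i j ≤ 0 := by
        intro i j
        have : A⁻¹ * B * S⁻¹ = a⁻¹ • (B * S⁻¹) := by
          rw [hAinv, Matrix.smul_mul, Matrix.one_mul, Matrix.smul_mul]
        rw [this]
        simp only [Matrix.smul_apply, smul_eq_mul]
        exact mul_nonpos_of_nonneg_of_nonpos (le_of_lt (inv_pos.mpr ha)) (hBS0 i j)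
      have hSC : ∀ i j, (S⁻¹ * C * A⁻¹) i j ≤ 0 := by
        intro i j
        have : S⁻¹ * C * A⁻¹ = a⁻¹ • (S⁻¹ * C) := by
          rw [hAinv, Matrix.mul_smul, Matrix.mul_one]
        rw [this]
        simp only [Matrix.smul_apply, smul_eq_mul]
        have : (S⁻¹ * C) i j ≤ 0 := by
          rw [Matrix.mul_apply]
          apply Finset.sum_nonpos
          intro k _
          exact mul_nonpos_of_nonneg_of_nonpos (hSinv i k) (hC0 k j)
        exact mul_nonpos_of_nonneg_of_nonpos (le_of_lt (inv_pos.mpr ha)) this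
      intro p q
      rw [hNinv]
      rcases p with p | p <;> rcases q with q | q
      · -- top-left block
        simp only [Matrix.fromBlocks_apply₁₁, Matrix.add_apply]
        have h1 : 0 ≤ A⁻¹ p q := by
          rw [hAinv]
          simp only [Matrix.smul_apply, Matrix.one_apply, smul_eq_mul]
          have : p = q := Subsingleton.elim p q
          simp [this]
          positivity
        have h2 : 0 ≤ (A⁻¹ * B * S⁻¹ * C * A⁻¹) p q := by
          have hrw : A⁻¹ * B * S⁻¹ * C * A⁻¹ = (a⁻¹ * a⁻¹) • (B * S⁻¹ * C) := by
            rw [hAinv]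
            rw [Matrix.smul_mul, Matrix.one_mul, Matrix.mul_smul, Matrix.mul_one,
              Matrix.smul_mul, Matrix.smul_mul, smul_smul]
          rw [hrw]
          simp only [Matrix.smul_apply, smul_eq_mul]
          have hE : 0 ≤ (B * S⁻¹ * C) p q := by
            rw [Matrix.mul_apply]
            apply Finset.sum_nonneg
            intro k _
            nlinarith [hBS0 p k, hC0 k q]
          positivity
        linarith
      · simp only [Matrix.fromBlocks_apply₁₂, Matrix.neg_apply]
        linarith [hBS p q]
      · simp only [Matrix.fromBlocks_apply₂₁, Matrix.neg_apply]
        linarith [hSC p q]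
      · simp only [Matrix.fromBlocks_apply₂₂]
        exact hSinv p q
    -- transfer back
    intro i j
    have hMeq : M = N.submatrix e.symm e.symm := by
      rw [hNdef]
      ext p q
      simp [Matrix.submatrix_apply]
    rw [hMeq, Matrix.inv_submatrix_equiv]
    exact hNinvNonneg _ _

theorem kMatrix_inverse_nonneg {n : ℕ} (M : Matrix (Fin n) (Fin n) ℝ)
    (hZ : IsZMat M) (hP : IsPMat M) :
    IsUnit M.det ∧ ∀ i j, 0 ≤ M⁻¹ i j := by
  obtain ⟨hdet, hinv⟩ := kMatrix_main n M hZ (isPMat_posMinors hP)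
  exact ⟨isUnit_iff_ne_zero.mpr hdet.ne', hinv⟩
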